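/- Any ℓ-fine partition of any rooted tree (T,r) admits an ordered skeleton, i.e. a sequence (X₀, X₁, …, X_m) such that X₀ is a hub containing r, every X_i is a hub or a shrub, the union of the X_i covers V(T), and for each i = 1,…,m the subgraph of T formed by X₀ ∪ X₁ ∪ … ∪ X_i is connected. -/

import Mathlib

open Classical

lemma induce_singleton_connected' {V : Type} (T : SimpleGraph V) (w : V) :
    (T.induce ({w} : Set V)).Connected := by
  haveI : Nonempty ({w} : Set V) := ⟨⟨w, rfl⟩⟩
  exact ⟨fun x y => (Subtype.ext (x.2.trans y.2.symm) : x = y) ▸ SimpleGraph.Reachable.refl x⟩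

lemma induce_union_connected_of_adj' {V : Type} {T : SimpleGraph V} {A B : Set V}
    (hA : (T.induce A).Connected) (hB : (T.induce B).Connected)
    {a b : V} (ha : a ∈ A) (hb : b ∈ B) (hab : T.Adj a b) :
    (T.induce (A ∪ B)).Connected := by
  have h1 : (T.induce (A ∪ {a, b})).Connected :=
    SimpleGraph.induce_union_connected hA.preconnected (SimpleGraph.induce_pair_connected_of_adj hab).preconnected
      ⟨a, ha, by simp⟩
  have h2 : (T.induce ((A ∪ {a, b}) ∪ B)).Connected :=
    SimpleGraph.induce_union_connected h1.preconnected hB.preconnected ⟨b, by simp, hb⟩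
  have hEq : (A ∪ {a, b}) ∪ B = A ∪ B := by
    ext x
    simp only [Set.mem_union, Set.mem_insert_iff, Set.mem_singleton_iff]
    constructor
    · rintro ((h | rfl | rfl) | h) <;> tauto
    · tauto
  rwa [hEq] at h2

lemma exists_hub' {V : Type} [Fintype V] [DecidableEq V] (T : SimpleGraph V) (Wset : Finset V)
    {w : V} (hw : w ∈ Wset) :
    ∃ H : Finset V,
      (H.Nonempty ∧ H ⊆ Wset ∧ (T.induce (H : Set V)).Connected ∧
        ∀ H' : Finset V, H ⊆ H' → H' ⊆ Wset → (T.induce (H' : Set V)).Connected → H' = H) ∧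
      w ∈ H := by
  classical
  set C : Finset (Finset V) :=
    Wset.powerset.filter (fun H => w ∈ H ∧ (T.induce (H : Set V)).Connected) with hC
  have hmem : ({w} : Finset V) ∈ C := by
    rw [hC, Finset.mem_filter, Finset.mem_powerset]
    refine ⟨Finset.singleton_subset_iff.mpr hw, Finset.mem_singleton_self w, ?_⟩
    rw [Finset.coe_singleton]
    exact induce_singleton_connected' T w
  obtain ⟨H, hH, hmax⟩ := C.exists_max_image Finset.card ⟨_, hmem⟩
  rw [hC, Finset.mem_filter, Finset.mem_powerset] at hH
  refine ⟨H, ⟨⟨w, hH.2.1⟩, hH.1, hH.2.2, ?_⟩, hH.2.1⟩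
  intro H' hsub hsub' hconn
  have hH' : H' ∈ C := by
    rw [hC, Finset.mem_filter, Finset.mem_powerset]
    exact ⟨hsub', hsub hH.2.1, hconn⟩
  exact (Finset.eq_of_subset_of_card_le hsub (hmax _ hH')).symm



/-- The tree order induced by the root `r`: `x ⪯ y` iff `x` lies on the (unique) path from
`r` to `y`, i.e. `dist r x + dist x y = dist r y`. -/
def TreeLE {V : Type} (T : SimpleGraph V) (r x y : V) : Prop :=
  T.dist r x + T.dist x y = T.dist r y

/-- A (vertex set of a) subtree of `T`: a non-empty set inducing a connected subgraph. -/
def IsSubtree {V : Type} (T : SimpleGraph V) (S : Finset V) : Prop :=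
  S.Nonempty ∧ (T.induce (S : Set V)).Connected

/-- An end subtree: its vertex set is the up-closure of some vertex in the tree order. -/
def IsEndSubtree {V : Type} (T : SimpleGraph V) (r : V) (S : Finset V) : Prop :=
  ∃ x : V, (S : Set V) = {v : V | TreeLE T r x v}

/-- `x` is the seed of the subtree `S`: the `⪯`-maximal vertex outside `S` preceding all of
`S`. -/
def IsSeed {V : Type} (T : SimpleGraph V) (r : V) (S : Finset V) (x : V) : Prop :=
  x ∉ S ∧ (∀ v ∈ S, TreeLE T r x v) ∧
    ∀ y : V, y ∉ S → (∀ v ∈ S, TreeLE T r y v) → TreeLE T r y x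

/-- An `ℓ`-fine partition `(W_A, W_B, S_A, S_B)` of a tree `T` of order `k` rooted at `r`. -/
structure IsFinePartition {V : Type} [Fintype V] [DecidableEq V] (T : SimpleGraph V) (r : V)
    (k ℓ : ℕ) (WA WB : Finset V) (SA SB : Finset (Finset V)) : Prop where
  /-- the members of `S_A ∪ S_B` are subtrees of `T` -/
  subtree : ∀ S ∈ SA ∪ SB, IsSubtree T S
  /-- (a) `W_A`, `W_B` and the vertex sets of the subtrees partition `V(T)`: -/
  disjointWAB : Disjoint WA WB
  disjointSW : ∀ S ∈ SA ∪ SB, Disjoint S (WA ∪ WB)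
  disjointSS : ∀ S₁ ∈ SA ∪ SB, ∀ S₂ ∈ SA ∪ SB, S₁ ≠ S₂ → Disjoint S₁ S₂
  cover : ∀ v : V, v ∈ WA ∨ v ∈ WB ∨ ∃ S ∈ SA ∪ SB, v ∈ S
  /-- (b) the root lies in `W_A ∪ W_B` -/
  rootMem : r ∈ WA ∪ WB
  /-- (c) `max {|W_A|, |W_B|} ≤ 336 k / ℓ` -/
  cardWA : (WA.card : ℝ) ≤ 336 * k / ℓ
  cardWB : (WB.card : ℝ) ≤ 336 * k / ℓ
  /-- (d) distances between cut vertices are odd iff exactly one endpoint is in `W_A` -/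
  parity : ∀ w₁ ∈ WA ∪ WB, ∀ w₂ ∈ WA ∪ WB,
    (Odd (T.dist w₁ w₂) ↔ (w₁ ∈ WA ∧ w₂ ∈ WB) ∨ (w₁ ∈ WB ∧ w₂ ∈ WA))
  /-- (e) each subtree has at most `ℓ` vertices -/
  small : ∀ S ∈ SA ∪ SB, S.card ≤ ℓ
  /-- (f) no tree of `S_A` meets the neighbourhood of `W_B`, and vice versa -/
  niceA : ∀ S ∈ SA, ∀ v ∈ S, ∀ w ∈ WB, ¬ T.Adj w v
  niceB : ∀ S ∈ SB, ∀ v ∈ S, ∀ w ∈ WA, ¬ T.Adj w v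
  /-- (g) each subtree has its seed in `W_A ∪ W_B` -/
  seedMem : ∀ S ∈ SA ∪ SB, ∃ x ∈ WA ∪ WB, IsSeed T r S x
  /-- (h) at most two vertices of `W_A ∪ W_B` have a neighbour in a given subtree -/
  twoSeeds : ∀ S ∈ SA ∪ SB,
    ({z ∈ ((WA ∪ WB : Finset V) : Set V) | ∃ v ∈ S, T.Adj z v}).ncard ≤ 2
  /-- (i) two distinct cut vertices with neighbours in the same subtree are at distance ≥ 6 -/
  sixApart : ∀ S ∈ SA ∪ SB, ∀ z₁ ∈ WA ∪ WB, ∀ z₂ ∈ WA ∪ WB, z₁ ≠ z₂ →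
    (∃ v ∈ S, T.Adj z₁ v) → (∃ v ∈ S, T.Adj z₂ v) → 6 ≤ T.dist z₁ z₂
  /-- (j) vertices of two distinct internal subtrees comparable in the tree order are at
  distance more than 2 -/
  internalSep : ∀ S₁ ∈ SA ∪ SB, ∀ S₂ ∈ SA ∪ SB, S₁ ≠ S₂ →
    ¬ IsEndSubtree T r S₁ → ¬ IsEndSubtree T r S₂ →
    ∀ v₁ ∈ S₁, ∀ v₂ ∈ S₂, TreeLE T r v₁ v₂ → 2 < T.dist v₁ v₂
  /-- (k) `S_B` contains no internal subtree -/
  noInternalB : ∀ S ∈ SB, IsEndSubtree T r S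
  /-- (l) the end subtrees in `S_A` have at least as many vertices in total as `S_B` -/
  endBound : (∑ S ∈ SB, S.card) ≤ ∑ S ∈ SA.filter (fun S => IsEndSubtree T r S), S.card

/-- A hub: a connected component of the forest induced on the cut vertices `Wset`, i.e. a
maximal connected subset of `Wset`. -/
def IsHub {V : Type} (T : SimpleGraph V) (Wset : Finset V) (Hb : Finset V) : Prop :=
  Hb.Nonempty ∧ Hb ⊆ Wset ∧ (T.induce (Hb : Set V)).Connected ∧
    ∀ H' : Finset V, Hb ⊆ H' → H' ⊆ Wset → (T.induce (H' : Set V)).Connected → H' = Hb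

/-- Every `ℓ`-fine partition of a rooted tree `(T,r)` has an ordered
skeleton: a sequence `X₀, …, X_m` of hubs and shrubs, with `X₀` a hub containing `r`,
covering `V(T)`, such that each initial union `X₀ ∪ ⋯ ∪ X_i` induces a connected subgraph. -/


theorem stmt2 (V : Type) [Fintype V] [DecidableEq V]
    (T : SimpleGraph V) (hT : T.IsTree) (k : ℕ) (hk : Fintype.card V = k)
    (r : V) (ℓ : ℕ) (WA WB : Finset V) (SA SB : Finset (Finset V))
    (hfp : IsFinePartition T r k ℓ WA WB SA SB) :
    ∃ (m : ℕ) (X : Fin (m + 1) → Finset V),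
      (IsHub T (WA ∪ WB) (X 0) ∧ r ∈ X 0) ∧
      (∀ i, IsHub T (WA ∪ WB) (X i) ∨ X i ∈ SA ∪ SB) ∧
      (∀ v : V, ∃ i, v ∈ X i) ∧
      (∀ i : Fin (m + 1), (T.induce {v : V | ∃ j, j ≤ i ∧ v ∈ X j}).Connected) := by
  classical
  have key : ∀ n m : ℕ, ∀ X : ℕ → Finset V,
      (IsHub T (WA ∪ WB) (X 0) ∧ r ∈ X 0) →
      (∀ i ≤ m, IsHub T (WA ∪ WB) (X i) ∨ X i ∈ SA ∪ SB) →
      (∀ i ≤ m, (T.induce {v : V | ∃ j, j ≤ i ∧ v ∈ X j}).Connected) →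
      (Finset.univ.filter (fun v => ¬ ∃ i, i ≤ m ∧ v ∈ X i)).card ≤ n →
      ∃ (m' : ℕ) (X' : ℕ → Finset V),
        (IsHub T (WA ∪ WB) (X' 0) ∧ r ∈ X' 0) ∧
        (∀ i ≤ m', IsHub T (WA ∪ WB) (X' i) ∨ X' i ∈ SA ∪ SB) ∧
        (∀ i ≤ m', (T.induce {v : V | ∃ j, j ≤ i ∧ v ∈ X' j}).Connected) ∧
        (∀ v : V, ∃ i, i ≤ m' ∧ v ∈ X' i) := by
    intro n
    induction n with
    | zero =>
      intro m X h0 h1 h2 hcard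
      refine ⟨m, X, h0, h1, h2, ?_⟩
      intro v
      by_contra hv
      have hmem : v ∈ Finset.univ.filter (fun v => ¬ ∃ i, i ≤ m ∧ v ∈ X i) := by
        simp only [Finset.mem_filter, Finset.mem_univ, true_and]
        exact hv
      have := Finset.card_pos.mpr ⟨v, hmem⟩
      omega
    | succ n ih =>
      intro m X h0 h1 h2 hcard
      by_cases hall : ∀ v : V, ∃ i, i ≤ m ∧ v ∈ X i
      · exact ⟨m, X, h0, h1, h2, hall⟩
      push_neg at hall
      obtain ⟨b0, hb0⟩ := hall
      have hrU : r ∈ {v : V | ∃ j, j ≤ m ∧ v ∈ X j} := ⟨0, Nat.zero_le m, h0.2⟩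
      have hb0U : b0 ∉ {v : V | ∃ j, j ≤ m ∧ v ∈ X j} := by
        intro ⟨j, hj, hm⟩; exact (hb0 j hj) hm
      obtain ⟨d, _, haU, hbU⟩ :=
        ((hT.isConnected.preconnected r b0).some).exists_boundary_dart _ hrU hb0U
      have hPiece : ∃ P : Finset V, d.snd ∈ P ∧ (T.induce (P : Set V)).Connected ∧
          (IsHub T (WA ∪ WB) P ∨ P ∈ SA ∪ SB) := by
        rcases hfp.cover d.snd with h | h | ⟨S, hS, hvS⟩
        · obtain ⟨P, hP, hbP⟩ := exists_hub' T (WA ∪ WB) (Finset.mem_union_left _ h)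
          exact ⟨P, hbP, hP.2.2.1, Or.inl hP⟩
        · obtain ⟨P, hP, hbP⟩ := exists_hub' T (WA ∪ WB) (Finset.mem_union_right _ h)
          exact ⟨P, hbP, hP.2.2.1, Or.inl hP⟩
        · exact ⟨S, hvS, (hfp.subtree S hS).2, Or.inr hS⟩
      obtain ⟨P, hbP, hPconn, hPhs⟩ := hPiece
      set X' : ℕ → Finset V := fun i => if i ≤ m then X i else P with hX'
      have hX'eq : ∀ j ≤ m, X' j = X j := fun j hj => if_pos hj
      have hX'eq2 : ∀ j, ¬ j ≤ m → X' j = P := fun j hj => if_neg hj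
      have hpre : ∀ i ≤ m, {v : V | ∃ j, j ≤ i ∧ v ∈ X' j} = {v : V | ∃ j, j ≤ i ∧ v ∈ X j} := by
        intro i hi
        ext v
        constructor
        · rintro ⟨j, hj, hm⟩
          exact ⟨j, hj, by rwa [hX'eq j (le_trans hj hi)] at hm⟩
        · rintro ⟨j, hj, hm⟩
          exact ⟨j, hj, by rwa [hX'eq j (le_trans hj hi)]⟩
      have hlast : {v : V | ∃ j, j ≤ m + 1 ∧ v ∈ X' j}
          = {v : V | ∃ j, j ≤ m ∧ v ∈ X j} ∪ (P : Set V) := by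
        ext v
        constructor
        · rintro ⟨j, hj, hm⟩
          by_cases hjm : j ≤ m
          · exact Or.inl ⟨j, hjm, by rwa [hX'eq j hjm] at hm⟩
          · right
            rwa [hX'eq2 j hjm] at hm
        · rintro (⟨j, hj, hm⟩ | hm)
          · exact ⟨j, le_trans hj (Nat.le_succ m), by rwa [hX'eq j hj]⟩
          · exact ⟨m + 1, le_rfl, by
              rw [hX'eq2 _ (Nat.not_succ_le_self m)]; exact hm⟩
      have h0' : IsHub T (WA ∪ WB) (X' 0) ∧ r ∈ X' 0 := by
        rw [hX'eq 0 (Nat.zero_le m)]; exact h0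
      have h1' : ∀ i ≤ m + 1, IsHub T (WA ∪ WB) (X' i) ∨ X' i ∈ SA ∪ SB := by
        intro i hi
        by_cases hjm : i ≤ m
        · rw [hX'eq i hjm]; exact h1 i hjm
        · rw [hX'eq2 i hjm]; exact hPhs
      have h2' : ∀ i ≤ m + 1, (T.induce {v : V | ∃ j, j ≤ i ∧ v ∈ X' j}).Connected := by
        intro i hi
        by_cases hjm : i ≤ m
        · rw [hpre i hjm]; exact h2 i hjm
        · have : i = m + 1 := by omega
          subst this
          rw [hlast]
          exact induce_union_connected_of_adj' (h2 m le_rfl) hPconn haU hbP d.adj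
      have hsub : Finset.univ.filter (fun v => ¬ ∃ i, i ≤ m + 1 ∧ v ∈ X' i)
          ⊆ Finset.univ.filter (fun v => ¬ ∃ i, i ≤ m ∧ v ∈ X i) := by
        intro v hv
        simp only [Finset.mem_filter, Finset.mem_univ, true_and] at hv ⊢
        intro ⟨j, hj, hm⟩
        exact hv ⟨j, le_trans hj (Nat.le_succ m), by rwa [hX'eq j hj]⟩
      have hbold : d.snd ∈ Finset.univ.filter (fun v => ¬ ∃ i, i ≤ m ∧ v ∈ X i) := by
        simp only [Finset.mem_filter, Finset.mem_univ, true_and]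
        exact hbU
      have hbnew : d.snd ∉ Finset.univ.filter (fun v => ¬ ∃ i, i ≤ m + 1 ∧ v ∈ X' i) := by
        simp only [Finset.mem_filter, Finset.mem_univ, true_and, not_not]
        exact ⟨m + 1, le_rfl, by rw [hX'eq2 _ (Nat.not_succ_le_self m)]; exact hbP⟩
      have hlt : (Finset.univ.filter (fun v => ¬ ∃ i, i ≤ m + 1 ∧ v ∈ X' i)).card
          < (Finset.univ.filter (fun v => ¬ ∃ i, i ≤ m ∧ v ∈ X i)).card :=
        Finset.card_lt_card ⟨hsub, fun hcon => hbnew (hcon hbold)⟩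
      exact ih (m + 1) X' h0' h1' h2' (by omega)
  obtain ⟨H0, hH0, hrH0⟩ := exists_hub' T (WA ∪ WB) hfp.rootMem
  obtain ⟨m, Xa, h0, h1, h2, hcov⟩ := key (Fintype.card V) 0 (fun _ => H0)
    ⟨hH0, hrH0⟩ (fun i _ => Or.inl hH0)
    (by
      intro i hi
      interval_cases i
      have : {v : V | ∃ j, j ≤ 0 ∧ v ∈ H0} = (H0 : Set V) := by
        ext v
        constructor
        · rintro ⟨j, _, hm⟩; exact hm
        · intro hm; exact ⟨0, le_rfl, hm⟩
      rw [this]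
      exact hH0.2.2.1)
    (le_of_le_of_eq (Finset.card_filter_le _ _) (by simp))
  refine ⟨m, fun i => Xa i, ?_, ?_, ?_, ?_⟩
  · simpa using h0
  · intro i
    exact h1 i (Nat.lt_succ_iff.mp i.isLt)
  · intro v
    obtain ⟨i, hi, hm⟩ := hcov v
    exact ⟨⟨i, Nat.lt_succ_of_le hi⟩, hm⟩
  · intro i
    have : {v : V | ∃ j : Fin (m + 1), j ≤ i ∧ v ∈ Xa j}
        = {v : V | ∃ j, j ≤ (i : ℕ) ∧ v ∈ Xa j} := by
      ext v
      constructor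
      · rintro ⟨j, hj, hm⟩
        exact ⟨j, hj, hm⟩
      · rintro ⟨j, hj, hm⟩
        exact ⟨⟨j, lt_of_le_of_lt hj i.isLt⟩, hj, hm⟩
    rw [this]
    exact h2 i (Nat.lt_succ_iff.mp i.isLt)
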